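/- Under the construction setup with 3 ≤ r ≤ 𝔫, set δ := 𝔫 − r + 1 and let C be the evaluation code on Z_f ⊕ Z_g of the F-subspace { w ∈ span_F(B_{r²}) : deg(w) ≤ (2r−4)·𝔫 + 1 }. Then C has dimension r² − 2 and minimum distance exactly δ(δ+2). -/

import Mathlib

open Polynomial
open scoped Classical

/-- The point set `Z_f ⊕ Z_g = {β + γ : β ∈ Z_f, γ ∈ Z_g}`. -/
noncomputable def rootSumSet {F : Type*} [Field F] (f g : F[X]) : Finset F :=
  (f.roots.toFinset ×ˢ g.roots.toFinset).image fun p => p.1 + p.2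

/-- The set `B_{r²} = {g^i f^j : 0 ≤ i, j ≤ r-1}` of polynomials. -/
def Bset {F : Type*} [Field F] (f g : F[X]) (r : ℕ) : Set F[X] :=
  {w | ∃ i j : ℕ, i < r ∧ j < r ∧ w = g ^ i * f ^ j}

/-- The linear evaluation map `F[X] → (S → F)` on a finite set `S` of points. -/
noncomputable def evalOn {F : Type*} [Field F] (S : Finset F) : F[X] →ₗ[F] (↥S → F) :=
  LinearMap.pi fun α => Polynomial.leval (α : F)

namespace Stmt13Aux

variable {F : Type*} [Field F]

lemma coeff_sum_monomial {r : ℕ} (a : Fin r → F) (k : ℕ) :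
    (∑ j : Fin r, monomial (j : ℕ) (a j)).coeff k = if h : k < r then a ⟨k, h⟩ else 0 := by
  rw [Polynomial.finset_sum_coeff]
  simp only [Polynomial.coeff_monomial]
  split
  · next h =>
    rw [Finset.sum_eq_single (⟨k, h⟩ : Fin r)]
    · simp
    · intro j _ hj
      rw [if_neg]
      intro hj'
      exact hj (by ext; simpa using hj')
    · simp
  · next h =>
    apply Finset.sum_eq_zero
    intro j _
    rw [if_neg]
    intro hj'
    exact h (hj' ▸ j.isLt)

lemma eval_sum_monomial {r : ℕ} (a : Fin r → F) (x : F) :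
    (∑ j : Fin r, monomial (j : ℕ) (a j)).eval x = ∑ j : Fin r, a j * x ^ (j : ℕ) := by
  simp [Polynomial.eval_finset_sum]

lemma natDegree_sum_monomial_lt {r : ℕ} (a : Fin r → F) (hr : 0 < r) :
    (∑ j : Fin r, monomial (j : ℕ) (a j)).natDegree < r := by
  have h := Polynomial.natDegree_sum_le_of_forall_le Finset.univ
    (fun j : Fin r => monomial (j : ℕ) (a j)) (n := r - 1) (fun j _ => (Polynomial.natDegree_monomial_le _).trans (by omega))
  exact lt_of_le_of_lt h (by omega)

lemma count_roots_le (P : Finset F) {q : F[X]} (hq : q ≠ 0) :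
    (P.filter fun x => q.eval x = 0).card ≤ q.natDegree := by
  have hsub : (P.filter fun x => q.eval x = 0) ⊆ q.roots.toFinset := by
    intro x hx
    rw [Finset.mem_filter] at hx
    rw [Multiset.mem_toFinset, Polynomial.mem_roots hq]
    exact hx.2
  calc (P.filter fun x => q.eval x = 0).card ≤ q.roots.toFinset.card := Finset.card_le_card hsub
    _ ≤ Multiset.card q.roots := q.roots.toFinset_card_le
    _ ≤ q.natDegree := q.card_roots'

lemma count_nonroots (P : Finset F) {q : F[X]} (hq : q ≠ 0) :
    P.card - q.natDegree ≤ (P.filter fun x => q.eval x ≠ 0).card := by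
  have h1 := count_roots_le P hq
  have h2 := Finset.card_filter_add_card_filter_not (s := P) (p := fun x => q.eval x = 0)
  simp only [ne_eq]
  omega

lemma poly_eq_zero_of_card {P : Finset F} {q : F[X]} (hdeg : q.natDegree < P.card)
    (h0 : ∀ x ∈ P, q.eval x = 0) : q = 0 := by
  by_contra hq
  have h1 := count_roots_le P hq
  rw [Finset.filter_true_of_mem h0] at h1
  omega

lemma card_filter_product {α β : Type*} (s : Finset α) (t : Finset β) (Q : α → β → Prop)
    [DecidablePred fun z : α × β => Q z.1 z.2] [∀ y : β, DecidablePred fun x => Q x y] :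
    ((s ×ˢ t).filter fun z => Q z.1 z.2).card = ∑ y ∈ t, (s.filter fun x => Q x y).card := by
  rw [Finset.card_filter, Finset.sum_product]
  rw [Finset.sum_comm]
  congr 1
  ext y
  rw [Finset.card_filter]

lemma prod_X_sub_C_dvd_of_eval_zero (s : Finset F) {q : F[X]} (h : ∀ x ∈ s, q.eval x = 0) :
    (∏ x ∈ s, (X - C x)) ∣ q := by
  by_cases hq : q = 0
  · simp [hq]
  · have : (∏ x ∈ s, (X - C x)) = (s.val.map fun x => X - C x).prod := by
      rfl
    rw [this, Multiset.prod_X_sub_C_dvd_iff_le_roots hq]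
    rw [Multiset.le_iff_count]
    intro x
    by_cases hx : x ∈ s
    · have h1 : s.val.count x = 1 :=
        Multiset.count_eq_one_of_mem s.nodup hx
      rw [h1, Polynomial.count_roots]
      exact (Polynomial.rootMultiplicity_pos hq).mpr (h x hx)
    · have : s.val.count x = 0 := by
        simp [Multiset.count_eq_zero, hx]
      omega

noncomputable def rowPoly {r : ℕ} (c : Fin r → Fin r → F) (i : Fin r) : F[X] :=
  ∑ j : Fin r, monomial (j : ℕ) (c i j)
noncomputable def colPoly {r : ℕ} (c : Fin r → Fin r → F) (y : F) : F[X] :=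
  ∑ i : Fin r, monomial (i : ℕ) ((rowPoly c i).eval y)

lemma rowPoly_coeff' {r : ℕ} (c : Fin r → Fin r → F) (i : Fin r) (k : ℕ) :
    (rowPoly c i).coeff k = if h : k < r then c i ⟨k, h⟩ else 0 := coeff_sum_monomial _ _
lemma colPoly_coeff' {r : ℕ} (c : Fin r → Fin r → F) (y : F) (k : ℕ) :
    (colPoly c y).coeff k = if h : k < r then (rowPoly c ⟨k, h⟩).eval y else 0 :=
  coeff_sum_monomial _ _
lemma rowPoly_coeff {r : ℕ} (c : Fin r → Fin r → F) (i j : Fin r) :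
    (rowPoly c i).coeff (j : ℕ) = c i j := by
  rw [rowPoly_coeff', dif_pos j.isLt]
lemma colPoly_coeff {r : ℕ} (c : Fin r → Fin r → F) (y : F) (i : Fin r) :
    (colPoly c y).coeff (i : ℕ) = (rowPoly c i).eval y := by
  rw [colPoly_coeff', dif_pos i.isLt]

noncomputable def PhiLin (f g : F[X]) (r : ℕ) : (Fin r → Fin r → F) →ₗ[F] F[X] where
  toFun c := ∑ i : Fin r, ∑ j : Fin r, c i j • (g ^ (i : ℕ) * f ^ (j : ℕ))
  map_add' c d := by
    simp only [Pi.add_apply, add_smul, Finset.sum_add_distrib]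
  map_smul' t c := by
    simp only [Pi.smul_apply, smul_eq_mul, RingHom.id_apply, Finset.smul_sum, smul_smul]

lemma PhiLin_apply (f g : F[X]) (r : ℕ) (c : Fin r → Fin r → F) :
    PhiLin f g r c = ∑ i : Fin r, ∑ j : Fin r, c i j • (g ^ (i : ℕ) * f ^ (j : ℕ)) := rfl

lemma PhiLin_single (f g : F[X]) {r : ℕ} (i j : Fin r) (t : F) :
    PhiLin f g r (fun i' j' => if i' = i ∧ j' = j then t else 0)
      = t • (g ^ (i : ℕ) * f ^ (j : ℕ)) := by
  rw [PhiLin_apply]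
  rw [Finset.sum_eq_single i]
  · rw [Finset.sum_eq_single j]
    · simp
    · intro j' _ hj'
      rw [if_neg (by tauto), zero_smul]
    · intro h
      exact absurd (Finset.mem_univ j) h
  · intro i' _ hi'
    apply Finset.sum_eq_zero
    intro j' _
    rw [if_neg (by tauto), zero_smul]
  · intro h
    exact absurd (Finset.mem_univ i) h

noncomputable def lamLin (r : ℕ) (a b : Fin r) : (Fin r → Fin r → F) →ₗ[F] F × F where
  toFun c := (c a a, c a b - c b a)
  map_add' c d := by
    simp only [Pi.add_apply, Prod.mk_add_mk, Prod.mk.injEq]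
    exact ⟨trivial, by ring⟩
  map_smul' t c := by
    simp only [Pi.smul_apply, smul_eq_mul, RingHom.id_apply, Prod.smul_mk, Prod.mk.injEq,
      smul_eq_mul]
    exact ⟨trivial, by ring⟩

theorem lower_bound {r n : ℕ} (hr : 3 ≤ r) (hrn : r ≤ n)
    (Pf Pg : Finset F) (hPf : Pf.card = n) (hPg : Pg.card = n)
    (hinj : ∀ β ∈ Pf, ∀ γ ∈ Pg, ∀ β' ∈ Pf, ∀ γ' ∈ Pg, β + γ = β' + γ' → β = β' ∧ γ = γ')
    (a b : Fin r) (ha : (a : ℕ) = r - 1) (hb : (b : ℕ) = r - 2)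
    (c : Fin r → Fin r → F) (hc : c ≠ 0)
    (haa : c a a = 0) (htie : c a b = c b a) :
    (n - r + 1) * (n - r + 1 + 2)
      ≤ ∑ γ ∈ Pg, (Pf.filter fun β => (colPoly c γ).eval β ≠ 0).card := by
  set m := n - r + 1 with hm
  have hr0 : 0 < r := by omega
  have hrowdeg : ∀ i, (rowPoly c i).natDegree < r := fun i => natDegree_sum_monomial_lt _ hr0
  have hcoldeg : ∀ γ, (colPoly c γ).natDegree < r := fun γ => natDegree_sum_monomial_lt _ hr0
  set cnt : F → ℕ := fun γ => (Pf.filter fun β => (colPoly c γ).eval β ≠ 0).card with hcntdef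
  set W := ∑ γ ∈ Pg, cnt γ with hWdef
  have hcnt : ∀ γ, colPoly c γ ≠ 0 → n - (colPoly c γ).natDegree ≤ cnt γ := by
    intro γ h
    simpa [hcntdef, hPf] using count_nonroots Pf h
  have hsumlb : ∀ (Γ : Finset F), Γ ⊆ Pg → ∀ k, (∀ γ ∈ Γ, k ≤ cnt γ) → Γ.card * k ≤ W := by
    intro Γ hΓ k hk
    calc Γ.card * k = ∑ _γ ∈ Γ, k := by rw [Finset.sum_const, smul_eq_mul]
    _ ≤ ∑ γ ∈ Γ, cnt γ := Finset.sum_le_sum hk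
    _ ≤ W := Finset.sum_le_sum_of_subset hΓ
  set Γ : Finset F := Pg.filter fun γ => colPoly c γ ≠ 0 with hΓdef
  have hΓsub : Γ ⊆ Pg := Finset.filter_subset _ _
  have hcol_ne : ∀ (i : Fin r) γ, (rowPoly c i).eval γ ≠ 0 → colPoly c γ ≠ 0 := by
    intro i γ hev h0
    exact hev (by rw [← colPoly_coeff c γ i, h0, Polynomial.coeff_zero])
  have hΓlb : ∀ i : Fin r, rowPoly c i ≠ 0 → n - (rowPoly c i).natDegree ≤ Γ.card := by
    intro i hi
    have hsub : (Pg.filter fun γ => (rowPoly c i).eval γ ≠ 0) ⊆ Γ := by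
      intro γ hγ
      rw [Finset.mem_filter] at hγ ⊢
      exact ⟨hγ.1, hcol_ne i γ hγ.2⟩
    calc n - (rowPoly c i).natDegree ≤ (Pg.filter fun γ => (rowPoly c i).eval γ ≠ 0).card := by
          simpa [hPg] using count_nonroots Pg hi
    _ ≤ Γ.card := Finset.card_le_card hsub
  by_cases hcab : c a b = 0
  · -- easy cases
    set I : Finset (Fin r) := Finset.univ.filter fun i => rowPoly c i ≠ 0 with hIdef
    have hIne : I.Nonempty := by
      by_contra hne
      rw [Finset.not_nonempty_iff_eq_empty] at hne
      apply hc
      funext i j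
      have hi : i ∉ I := hne ▸ Finset.notMem_empty i
      rw [Finset.mem_filter] at hi
      push_neg at hi
      have : rowPoly c i = 0 := hi (Finset.mem_univ i)
      rw [← rowPoly_coeff c i j, this, Polynomial.coeff_zero]; rfl
    set imax := I.max' hIne with himaxdef
    have himem : rowPoly c imax ≠ 0 := by
      have := I.max'_mem hIne
      rw [Finset.mem_filter] at this
      exact this.2
    have hzero : ∀ i : Fin r, imax < i → rowPoly c i = 0 := by
      intro i hi
      by_contra h0
      have : i ∈ I := by rw [Finset.mem_filter]; exact ⟨Finset.mem_univ i, h0⟩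
      exact absurd (I.le_max' i this) (not_le.mpr hi)
    have hcoldeg2 : ∀ γ, (colPoly c γ).natDegree ≤ (imax : ℕ) := by
      intro γ
      rw [Polynomial.natDegree_le_iff_coeff_eq_zero]
      intro N hN
      rw [colPoly_coeff']
      split
      · next h =>
        rw [hzero ⟨N, h⟩ (by rw [Fin.lt_def]; exact hN), Polynomial.eval_zero]
      · rfl
    have hcnt2 : ∀ γ ∈ Γ, n - (imax : ℕ) ≤ cnt γ := by
      intro γ hγ
      rw [hΓdef, Finset.mem_filter] at hγ
      have := hcnt γ hγ.2
      have := hcoldeg2 γ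
      omega
    have hWlb : Γ.card * (n - (imax : ℕ)) ≤ W := hsumlb Γ hΓsub _ hcnt2
    have hΓc : n - (rowPoly c imax).natDegree ≤ Γ.card := hΓlb imax himem
    -- case split on imax
    have hfinal : m * (m + 2) ≤ (n - (rowPoly c imax).natDegree) * (n - (imax : ℕ)) := by
      rcases lt_or_ge (imax : ℕ) (r - 2) with h1 | h2
      · -- imax ≤ r - 3
        have hd : (rowPoly c imax).natDegree ≤ r - 1 := by have := hrowdeg imax; omega
        apply Nat.mul_le_mul <;> omega
      rcases eq_or_lt_of_le h2 with h2 | h3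
      · -- imax = r - 2
        have hia : imax = b := by apply Fin.ext; omega
        have hcba : c b a = 0 := htie ▸ hcab
        have hd : (rowPoly c imax).natDegree ≤ r - 2 := by
          rw [Polynomial.natDegree_le_iff_coeff_eq_zero]
          intro N hN
          rw [rowPoly_coeff']
          split
          · next h =>
            have hNa : (⟨N, h⟩ : Fin r) = a := by apply Fin.ext; simp [ha]; omega
            rw [hia, hNa, hcba]
          · rfl
        have h1 : m * (m+2) ≤ (m+1) * (m+1) := by nlinarith
        refine h1.trans (Nat.mul_le_mul (by omega) (by omega))
      · -- imax = r - 1, i.e. imax = a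
        have hia : imax = a := by apply Fin.ext; have := imax.isLt; omega
        have hd : (rowPoly c imax).natDegree ≤ r - 3 := by
          rw [Polynomial.natDegree_le_iff_coeff_eq_zero]
          intro N hN
          rw [rowPoly_coeff']
          split
          · next h =>
            rcases (by omega : N = r - 2 ∨ N = r - 1) with hN2 | hN2
            · have hNb : (⟨N, h⟩ : Fin r) = b := by apply Fin.ext; simp [hb]; omega
              rw [hia, hNb, hcab]
            · have hNa : (⟨N, h⟩ : Fin r) = a := by apply Fin.ext; simp [ha]; omega
              rw [hia, hNa, haa]
          · rfl
        rw [Nat.mul_comm]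
        apply Nat.mul_le_mul <;> omega
    calc m * (m + 2) ≤ (n - (rowPoly c imax).natDegree) * (n - (imax : ℕ)) := hfinal
    _ ≤ Γ.card * (n - (imax : ℕ)) := Nat.mul_le_mul_right _ hΓc
    _ ≤ W := hWlb
  · -- hard case : c a b ≠ 0
    set cc := c a b with hccdef
    have hab : a ≠ b := by intro h; rw [h] at ha; omega
    have har : r - 1 < r := by omega
    have hbr : r - 2 < r := by omega
    have haF : (⟨r - 1, har⟩ : Fin r) = a := by apply Fin.ext; simp [ha]
    have hbF : (⟨r - 2, hbr⟩ : Fin r) = b := by apply Fin.ext; simp [hb]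
    have hrowa : rowPoly c a ≠ 0 := by
      intro h0
      exact hcab (by rw [hccdef, ← rowPoly_coeff c a b, h0, Polynomial.coeff_zero])
    have hdega : (rowPoly c a).natDegree = r - 2 := by
      apply le_antisymm
      · rw [Polynomial.natDegree_le_iff_coeff_eq_zero]
        intro N hN
        rw [rowPoly_coeff']
        split
        · next h =>
          have hNa : (⟨N, h⟩ : Fin r) = a := by apply Fin.ext; simp [ha]; omega
          rw [hNa, haa]
        · rfl
      · apply Polynomial.le_natDegree_of_ne_zero
        rw [rowPoly_coeff', dif_pos hbr, hbF]
        exact hcab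
    have hΓc1 : m + 1 ≤ Γ.card := by
      have h1 := hΓlb a hrowa
      rw [hdega] at h1
      omega
    rcases lt_or_ge Γ.card (m + 2) with hΓsmall | hΓbig
    swap
    · have hcnt2 : ∀ γ ∈ Γ, m ≤ cnt γ := by
        intro γ hγ
        rw [Finset.mem_filter] at hγ
        have h1 := hcnt γ hγ.2
        have h2 := hcoldeg γ
        omega
      calc m * (m + 2) = (m + 2) * m := Nat.mul_comm _ _
      _ ≤ Γ.card * m := Nat.mul_le_mul_right _ hΓbig
      _ ≤ W := hsumlb Γ hΓsub m hcnt2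
    · have hΓcard : Γ.card = m + 1 := by omega
      set Z0 : Finset F := Pg \ Γ with hZ0def
      have hZ0card : Z0.card = r - 2 := by
        rw [hZ0def, Finset.card_sdiff_of_subset hΓsub, hPg, hΓcard]
        omega
      have hZ0row : ∀ γ ∈ Z0, ∀ i : Fin r, (rowPoly c i).eval γ = 0 := by
        intro γ hγ i
        rw [hZ0def, Finset.mem_sdiff] at hγ
        have hcol0 : colPoly c γ = 0 := by
          by_contra h0
          exact hγ.2 (Finset.mem_filter.mpr ⟨hγ.1, h0⟩)
        rw [← colPoly_coeff c γ i, hcol0, Polynomial.coeff_zero]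
      set B : F[X] := ∏ x ∈ Z0, (X - C x) with hBdef
      have hBmonic : B.Monic := monic_prod_of_monic _ _ fun x _ => monic_X_sub_C x
      have hBdeg : B.natDegree = r - 2 := by
        rw [hBdef, Polynomial.natDegree_prod _ _ fun x _ => X_sub_C_ne_zero x]
        simp [Polynomial.natDegree_X_sub_C, hZ0card]
      have hBr2 : B.coeff (r - 2) = 1 := by
        have := hBmonic.coeff_natDegree
        rwa [hBdeg] at this
      have hBr1 : B.coeff (r - 1) = 0 :=
        Polynomial.coeff_eq_zero_of_natDegree_lt (by omega)
      have hBeval : ∀ γ, B.eval γ = 0 ↔ γ ∈ Z0 := by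
        intro γ
        rw [hBdef, Polynomial.eval_prod, Finset.prod_eq_zero_iff]
        constructor
        · rintro ⟨x, hx, hx0⟩
          simp only [Polynomial.eval_sub, Polynomial.eval_X, Polynomial.eval_C,
            sub_eq_zero] at hx0
          rwa [hx0]
        · intro h
          exact ⟨γ, h, by simp⟩
      have hdvd : ∀ i : Fin r, B ∣ rowPoly c i := fun i =>
        prod_X_sub_C_dvd_of_eval_zero Z0 fun γ hγ => hZ0row γ hγ i
      choose ρ hρ using hdvd
      have hρdeg : ∀ i, (ρ i).natDegree ≤ 1 := by
        intro i
        by_cases h0 : ρ i = 0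
        · simp [h0]
        · have h2 := hrowdeg i
          rw [hρ i, Polynomial.natDegree_mul hBmonic.ne_zero h0] at h2
          omega
      set u : Fin r → F := fun i => (ρ i).coeff 0 with hudef
      set v : Fin r → F := fun i => (ρ i).coeff 1 with hvdef
      have hρeq : ∀ i, ρ i = C (v i) * X + C (u i) := fun i =>
        Polynomial.eq_X_add_C_of_natDegree_le_one (hρdeg i)
      have hcoefflin : ∀ (D : F[X]) (u' w' : F) (k : ℕ),
          (D * (C w' * X + C u')).coeff (k + 1) = u' * D.coeff (k + 1) + w' * D.coeff k := by
        intro D u' w' k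
        rw [mul_add, Polynomial.coeff_add, mul_comm D (C w' * X), mul_assoc,
          Polynomial.coeff_C_mul, Polynomial.coeff_X_mul, Polynomial.coeff_mul_C]
        ring
      have hrowcoeff : ∀ (i : Fin r) (k : ℕ),
          (rowPoly c i).coeff (k + 1) = u i * B.coeff (k + 1) + v i * B.coeff k := by
        intro i k
        rw [hρ i, hρeq i]
        exact hcoefflin B (u i) (v i) k
      have er1 : r - 2 + 1 = r - 1 := by omega
      have er2 : r - 3 + 1 = r - 2 := by omega
      have hva : v a = 0 := by
        have h1 := hrowcoeff a (r - 2)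
        rw [er1, hBr1, hBr2] at h1
        have h2 : (rowPoly c a).coeff (r - 1) = c a a := by
          rw [← haF, rowPoly_coeff', dif_pos har, haF]
        rw [h2, haa] at h1
        simpa using h1.symm
      have hua : u a = cc := by
        have h1 := hrowcoeff a (r - 3)
        rw [er2, hBr2] at h1
        have h2 : (rowPoly c a).coeff (r - 2) = c a b := by
          rw [rowPoly_coeff', dif_pos hbr, hbF]
        rw [h2, hva] at h1
        have h3 : u a = c a b := by simpa using h1.symm
        rw [hccdef]
        exact h3
      have hvb : v b = cc := by
        have h1 := hrowcoeff b (r - 2)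
        rw [er1, hBr1, hBr2] at h1
        have h2 : (rowPoly c b).coeff (r - 1) = c b a := by
          rw [← haF, rowPoly_coeff', dif_pos har, haF]
        rw [h2, ← htie] at h1
        simpa using h1.symm
      have hccne : cc ≠ 0 := hcab
      set U : F[X] := ∑ i : Fin r, monomial (i : ℕ) (u i) with hUdef
      set V : F[X] := ∑ i : Fin r, monomial (i : ℕ) (v i) with hVdef
      have hUcoeff : ∀ k : ℕ, U.coeff k = if h : k < r then u ⟨k, h⟩ else 0 := fun k =>
        coeff_sum_monomial u k
      have hVcoeff : ∀ k : ℕ, V.coeff k = if h : k < r then v ⟨k, h⟩ else 0 := fun k =>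
        coeff_sum_monomial v k
      have hUtop : U.coeff (r - 1) = cc := by rw [hUcoeff, dif_pos har, haF, hua]
      have hUne : U ≠ 0 := fun h0 => hccne (by rw [← hUtop, h0, Polynomial.coeff_zero])
      have hUdeg : U.natDegree ≤ r - 1 := by
        have := natDegree_sum_monomial_lt u hr0
        rw [← hUdef] at this
        omega
      have hVr2 : V.coeff (r - 2) = cc := by rw [hVcoeff, dif_pos hbr, hbF, hvb]
      have hVne : V ≠ 0 := fun h0 => hccne (by rw [← hVr2, h0, Polynomial.coeff_zero])
      have hVdeg : V.natDegree ≤ r - 2 := by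
        rw [Polynomial.natDegree_le_iff_coeff_eq_zero]
        intro N hN
        rw [hVcoeff]
        split
        · next h =>
          have hNa : (⟨N, h⟩ : Fin r) = a := by apply Fin.ext; simp [ha]; omega
          rw [hNa, hva]
        · rfl
      have hroweval : ∀ (i : Fin r) (γ : F),
          (rowPoly c i).eval γ = B.eval γ * (v i * γ + u i) := by
        intro i γ
        rw [hρ i, hρeq i]
        simp [Polynomial.eval_mul]
      have hUeval : ∀ x : F, U.eval x = ∑ i : Fin r, u i * x ^ (i : ℕ) := by
        intro x
        rw [hUdef]
        simp [Polynomial.eval_finset_sum]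
      have hVeval : ∀ x : F, V.eval x = ∑ i : Fin r, v i * x ^ (i : ℕ) := by
        intro x
        rw [hVdef]
        simp [Polynomial.eval_finset_sum]
      have hfact : ∀ γ β : F,
          (colPoly c γ).eval β = B.eval γ * (U.eval β + γ * V.eval β) := by
        intro γ β
        have h1 : (colPoly c γ).eval β = ∑ i : Fin r, (rowPoly c i).eval γ * β ^ (i : ℕ) := by
          rw [colPoly]
          simp [Polynomial.eval_finset_sum]
        rw [h1, hUeval, hVeval, Finset.mul_sum, ← Finset.sum_add_distrib, Finset.mul_sum]
        apply Finset.sum_congr rfl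
        intro i _
        rw [hroweval i γ]
        ring
      set zcnt : F → ℕ := fun γ => (Pf.filter fun β => U.eval β + γ * V.eval β = 0).card
        with hzdef
      have hzle : ∀ γ, zcnt γ ≤ n := by
        intro γ
        rw [hzdef]
        calc (Pf.filter fun β => U.eval β + γ * V.eval β = 0).card
            ≤ Pf.card := Finset.card_le_card (Finset.filter_subset _ _)
        _ = n := hPf
      have hcntΓ : ∀ γ ∈ Γ, cnt γ = n - zcnt γ := by
        intro γ hγ
        have hγZ0 : γ ∉ Z0 := by
          rw [hZ0def, Finset.mem_sdiff]
          intro h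
          exact h.2 hγ
        have hBγ : B.eval γ ≠ 0 := fun h0 => hγZ0 ((hBeval γ).mp h0)
        have hfe : (Pf.filter fun β => (colPoly c γ).eval β ≠ 0)
            = (Pf.filter fun β => ¬(U.eval β + γ * V.eval β = 0)) := by
          apply Finset.filter_congr
          intro β _
          rw [hfact γ β]
          simp [hBγ]
        have h2 := Finset.card_filter_add_card_filter_not (s := Pf)
          (p := fun β => U.eval β + γ * V.eval β = 0)
        rw [hPf] at h2
        simp only [hcntdef, hfe, hzdef]
        omega
      set dcom : ℕ := (Pf.filter fun β => U.eval β = 0 ∧ V.eval β = 0).card with hdcomdef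
      have hdle : dcom ≤ r - 2 := by
        have hsub : (Pf.filter fun β => U.eval β = 0 ∧ V.eval β = 0)
            ⊆ (Pf.filter fun β => V.eval β = 0) := by
          intro β hβ
          rw [Finset.mem_filter] at hβ ⊢
          exact ⟨hβ.1, hβ.2.2⟩
        have := (Finset.card_le_card hsub).trans (count_roots_le Pf hVne)
        omega
      rcases lt_or_ge dcom (r - 2) with hdsmall | hdbig
      · -- d ≤ r - 3
        set wcnt : F → ℕ := fun γ =>
          (Pf.filter fun β => V.eval β ≠ 0 ∧ U.eval β + γ * V.eval β = 0).card with hwdef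
        have hzw : ∀ γ, zcnt γ ≤ dcom + wcnt γ := by
          intro γ
          rw [hzdef, hdcomdef, hwdef]
          have hsub : (Pf.filter fun β => U.eval β + γ * V.eval β = 0)
              ⊆ (Pf.filter fun β => U.eval β = 0 ∧ V.eval β = 0)
                ∪ (Pf.filter fun β => V.eval β ≠ 0 ∧ U.eval β + γ * V.eval β = 0) := by
            intro β hβ
            rw [Finset.mem_filter] at hβ
            rw [Finset.mem_union, Finset.mem_filter, Finset.mem_filter]
            by_cases hV : V.eval β = 0
            · left
              refine ⟨hβ.1, ?_, hV⟩
              have := hβ.2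
              rw [hV] at this
              simpa using this
            · right
              exact ⟨hβ.1, hV, hβ.2⟩
          exact (Finset.card_le_card hsub).trans (Finset.card_union_le _ _)
        have hsumw : ∑ γ ∈ Γ, wcnt γ ≤ n - dcom := by
          have hdisj : ∀ γ₁ ∈ Γ, ∀ γ₂ ∈ Γ, γ₁ ≠ γ₂ →
              Disjoint (Pf.filter fun β => V.eval β ≠ 0 ∧ U.eval β + γ₁ * V.eval β = 0)
                (Pf.filter fun β => V.eval β ≠ 0 ∧ U.eval β + γ₂ * V.eval β = 0) := by
            intro γ₁ _ γ₂ _ hne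
            rw [Finset.disjoint_left]
            intro β h1 h2
            rw [Finset.mem_filter] at h1 h2
            apply hne
            have hV := h1.2.1
            have e1 := h1.2.2
            have e2 := h2.2.2
            have : γ₁ * V.eval β = γ₂ * V.eval β := by linear_combination e1 - e2
            exact mul_right_cancel₀ hV this
          have hbu : (Γ.biUnion fun γ =>
              Pf.filter fun β => V.eval β ≠ 0 ∧ U.eval β + γ * V.eval β = 0).card
              = ∑ γ ∈ Γ, wcnt γ := Finset.card_biUnion hdisj
          have hbusub : (Γ.biUnion fun γ =>
              Pf.filter fun β => V.eval β ≠ 0 ∧ U.eval β + γ * V.eval β = 0)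
              ⊆ Pf.filter fun β => V.eval β ≠ 0 := by
            intro β hβ
            rw [Finset.mem_biUnion] at hβ
            obtain ⟨γ, _, hβ⟩ := hβ
            rw [Finset.mem_filter] at hβ ⊢
            exact ⟨hβ.1, hβ.2.1⟩
          have h3 : (Pf.filter fun β => V.eval β ≠ 0).card + dcom ≤ n := by
            have hdisj2 : Disjoint (Pf.filter fun β => V.eval β ≠ 0)
                (Pf.filter fun β => U.eval β = 0 ∧ V.eval β = 0) := by
              rw [Finset.disjoint_left]
              intro β h1 h2
              rw [Finset.mem_filter] at h1 h2
              exact h1.2 h2.2.2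
            have := Finset.card_union_of_disjoint hdisj2
            have hsub2 : (Pf.filter fun β => V.eval β ≠ 0)
                ∪ (Pf.filter fun β => U.eval β = 0 ∧ V.eval β = 0) ⊆ Pf :=
              Finset.union_subset (Finset.filter_subset _ _) (Finset.filter_subset _ _)
            have := Finset.card_le_card hsub2
            rw [hPf] at this
            omega
          have := Finset.card_le_card hbusub
          omega
        have hkey : ∀ γ ∈ Γ, (n - dcom) ≤ cnt γ + wcnt γ := by
          intro γ hγ
          have h1 := hcntΓ γ hγ
          have h2 := hzw γ
          have h3 := hzle γ
          omega
        have hsum1 : Γ.card * (n - dcom) ≤ (∑ γ ∈ Γ, cnt γ) + ∑ γ ∈ Γ, wcnt γ := by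
          rw [← Finset.sum_add_distrib]
          calc Γ.card * (n - dcom) = ∑ _γ ∈ Γ, (n - dcom) := by
                rw [Finset.sum_const, smul_eq_mul]
          _ ≤ ∑ γ ∈ Γ, (cnt γ + wcnt γ) := Finset.sum_le_sum hkey
        have hWge : ∑ γ ∈ Γ, cnt γ ≤ W := Finset.sum_le_sum_of_subset hΓsub
        have hmul : (m + 1) * (n - dcom) = m * (n - dcom) + (n - dcom) := by ring
        have hfin : m * (m + 2) ≤ m * (n - dcom) :=
          Nat.mul_le_mul_left m (by omega)
        rw [hΓcard] at hsum1
        omega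
      · -- d = r - 2
        have hdcom : dcom = r - 2 := by omega
        set St : Finset F := Pf.filter fun β => U.eval β = 0 ∧ V.eval β = 0 with hStdef
        have hStcard : St.card = r - 2 := hdcom
        set D : F[X] := ∏ x ∈ St, (X - C x) with hDdef
        have hDmonic : D.Monic := monic_prod_of_monic _ _ fun x _ => monic_X_sub_C x
        have hDdeg : D.natDegree = r - 2 := by
          rw [hDdef, Polynomial.natDegree_prod _ _ fun x _ => X_sub_C_ne_zero x]
          simp [Polynomial.natDegree_X_sub_C, hStcard]
        have hDr2 : D.coeff (r - 2) = 1 := by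
          have := hDmonic.coeff_natDegree
          rwa [hDdeg] at this
        have hDr1 : D.coeff (r - 1) = 0 :=
          Polynomial.coeff_eq_zero_of_natDegree_lt (by omega)
        have hDeval : ∀ β, D.eval β = 0 ↔ β ∈ St := by
          intro β
          rw [hDdef, Polynomial.eval_prod, Finset.prod_eq_zero_iff]
          constructor
          · rintro ⟨x, hx, hx0⟩
            simp only [Polynomial.eval_sub, Polynomial.eval_X, Polynomial.eval_C,
              sub_eq_zero] at hx0
            rwa [hx0]
          · intro h
            exact ⟨β, h, by simp⟩
        have hDV : D ∣ V := by
          apply prod_X_sub_C_dvd_of_eval_zero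
          intro x hx
          rw [hStdef, Finset.mem_filter] at hx
          exact hx.2.2
        have hDU : D ∣ U := by
          apply prod_X_sub_C_dvd_of_eval_zero
          intro x hx
          rw [hStdef, Finset.mem_filter] at hx
          exact hx.2.1
        obtain ⟨τ, hτ⟩ := hDV
        obtain ⟨ℓ, hℓ⟩ := hDU
        have hτne : τ ≠ 0 := by
          intro h0
          rw [h0, mul_zero] at hτ
          exact hVne hτ
        have hℓne : ℓ ≠ 0 := by
          intro h0
          rw [h0, mul_zero] at hℓ
          exact hUne hℓ
        have hτdeg : τ.natDegree = 0 := by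
          have := hVdeg
          rw [hτ, Polynomial.natDegree_mul hDmonic.ne_zero hτne] at this
          omega
        have hℓdeg : ℓ.natDegree ≤ 1 := by
          have := hUdeg
          rw [hℓ, Polynomial.natDegree_mul hDmonic.ne_zero hℓne] at this
          omega
        have hℓeq : ℓ = C (ℓ.coeff 1) * X + C (ℓ.coeff 0) :=
          Polynomial.eq_X_add_C_of_natDegree_le_one hℓdeg
        have hτeq : τ = C (τ.coeff 0) := Polynomial.eq_C_of_natDegree_eq_zero hτdeg
        have hτval : τ.coeff 0 = cc := by
          have h1 : V.coeff (r - 2) = D.coeff (r - 2) * τ.coeff 0 := by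
            conv_lhs => rw [hτ, hτeq]
            rw [Polynomial.coeff_mul_C]
          rw [hVr2, hDr2, one_mul] at h1
          exact h1.symm
        have hℓ1 : ℓ.coeff 1 = cc := by
          have h1 : U.coeff (r - 1) = ℓ.coeff 0 * D.coeff (r - 1) + ℓ.coeff 1 * D.coeff (r - 2) := by
            conv_lhs => rw [hℓ, hℓeq]
            rw [← er1]
            exact hcoefflin D (ℓ.coeff 0) (ℓ.coeff 1) (r - 2)
          rw [hUtop, hDr1, hDr2, mul_zero, zero_add, mul_one] at h1
          exact h1.symm
        set u' : F := ℓ.coeff 0 with hu'def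
        set s₀ : F := -(u' / cc) with hs0def
        have hUVeval : ∀ β γ : F,
            U.eval β + γ * V.eval β = D.eval β * (cc * (β + γ) + u') := by
          intro β γ
          conv_lhs => rw [hℓ, hℓeq, hτ, hτeq]
          simp only [Polynomial.eval_mul, Polynomial.eval_add, Polynomial.eval_C,
            Polynomial.eval_X, hℓ1, hτval]
          ring
        have hccs0 : cc * s₀ = -u' := by
          have h5 : cc * (u' / cc) = u' := by field_simp
          rw [hs0def, mul_neg, h5]
        have hlin : ∀ t : F, cc * t + u' = 0 ↔ t = s₀ := by
          intro t
          constructor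
          · intro h
            apply mul_left_cancel₀ hccne
            rw [hccs0]
            linear_combination h
          · intro h
            rw [h, hccs0]
            ring
        have hzer : ∀ β γ : F, (U.eval β + γ * V.eval β = 0) ↔ (D.eval β = 0 ∨ β + γ = s₀) := by
          intro β γ
          rw [hUVeval β γ, mul_eq_zero, hlin (β + γ)]
        set ecnt : F → ℕ := fun γ => (Pf.filter fun β => β + γ = s₀).card with hedef
        have hze : ∀ γ, zcnt γ ≤ (r - 2) + ecnt γ := by
          intro γ
          rw [hzdef, hedef]
          have hsub : (Pf.filter fun β => U.eval β + γ * V.eval β = 0)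
              ⊆ St ∪ (Pf.filter fun β => β + γ = s₀) := by
            intro β hβ
            rw [Finset.mem_filter] at hβ
            rcases (hzer β γ).mp hβ.2 with h | h
            · exact Finset.mem_union_left _ ((hDeval β).mp h)
            · exact Finset.mem_union_right _ (Finset.mem_filter.mpr ⟨hβ.1, h⟩)
          calc (Pf.filter fun β => U.eval β + γ * V.eval β = 0).card
              ≤ (St ∪ (Pf.filter fun β => β + γ = s₀)).card := Finset.card_le_card hsub
          _ ≤ St.card + (Pf.filter fun β => β + γ = s₀).card := Finset.card_union_le _ _
          _ = (r - 2) + (Pf.filter fun β => β + γ = s₀).card := by rw [hStcard]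
        have hecnt1 : ∀ γ, ecnt γ ≤ 1 := by
          intro γ
          rw [hedef]
          apply Finset.card_le_one.mpr
          intro β1 h1 β2 h2
          rw [Finset.mem_filter] at h1 h2
          have : β1 + γ = β2 + γ := by rw [h1.2, h2.2]
          exact add_right_cancel this
        have hsume : ∑ γ ∈ Γ, ecnt γ ≤ 1 := by
          rw [← Finset.sum_filter_ne_zero]
          have hcard1 : (Γ.filter fun γ => ecnt γ ≠ 0).card ≤ 1 := by
            apply Finset.card_le_one.mpr
            intro γ1 h1 γ2 h2
            rw [Finset.mem_filter] at h1 h2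
            have hne1 : (Pf.filter fun β => β + γ1 = s₀).Nonempty := by
              rw [← Finset.card_pos]
              have h5 := h1.2
              simp only [hedef] at h5
              omega
            have hne2 : (Pf.filter fun β => β + γ2 = s₀).Nonempty := by
              rw [← Finset.card_pos]
              have h5 := h2.2
              simp only [hedef] at h5
              omega
            obtain ⟨β1, hβ1⟩ := hne1
            obtain ⟨β2, hβ2⟩ := hne2
            rw [Finset.mem_filter] at hβ1 hβ2
            have hsum : β1 + γ1 = β2 + γ2 := by rw [hβ1.2, hβ2.2]
            exact (hinj β1 hβ1.1 γ1 (hΓsub h1.1) β2 hβ2.1 γ2 (hΓsub h2.1) hsum).2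
          calc ∑ γ ∈ Γ.filter fun γ => ecnt γ ≠ 0, ecnt γ
              ≤ ∑ _γ ∈ Γ.filter fun γ => ecnt γ ≠ 0, 1 :=
                Finset.sum_le_sum fun γ _ => hecnt1 γ
          _ = (Γ.filter fun γ => ecnt γ ≠ 0).card := by
                rw [Finset.sum_const, smul_eq_mul, mul_one]
          _ ≤ 1 := hcard1
        have hkey : ∀ γ ∈ Γ, m + 1 ≤ cnt γ + ecnt γ := by
          intro γ hγ
          have h1 := hcntΓ γ hγ
          have h2 := hze γ
          have h3 := hzle γ
          have h4 := hecnt1 γ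
          omega
        have hsum1 : Γ.card * (m + 1) ≤ (∑ γ ∈ Γ, cnt γ) + ∑ γ ∈ Γ, ecnt γ := by
          rw [← Finset.sum_add_distrib]
          calc Γ.card * (m + 1) = ∑ _γ ∈ Γ, (m + 1) := by
                rw [Finset.sum_const, smul_eq_mul]
          _ ≤ ∑ γ ∈ Γ, (cnt γ + ecnt γ) := Finset.sum_le_sum hkey
        have hWge : ∑ γ ∈ Γ, cnt γ ≤ W := Finset.sum_le_sum_of_subset hΓsub
        have hmul : (m + 1) * (m + 1) = m * (m + 2) + 1 := by ring
        rw [hΓcard] at hsum1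
        omega


theorem upper_bound {r n : ℕ} (hr : 3 ≤ r) (hrn : r ≤ n)
    (Pf Pg : Finset F) (hPf : Pf.card = n) (hPg : Pg.card = n)
    (h0f : (0 : F) ∈ Pf) (h0g : (0 : F) ∈ Pg)
    (hinj : ∀ β ∈ Pf, ∀ γ ∈ Pg, ∀ β' ∈ Pf, ∀ γ' ∈ Pg, β + γ = β' + γ' → β = β' ∧ γ = γ')
    (a b : Fin r) (ha : (a : ℕ) = r - 1) (hb : (b : ℕ) = r - 2) :
    ∃ c : Fin r → Fin r → F, c a a = 0 ∧ c a b = 1 ∧ c b a = 1 ∧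
      ∑ γ ∈ Pg, (Pf.filter fun β => (colPoly c γ).eval β ≠ 0).card
        = (n - r + 1) * (n - r + 1 + 2) := by
  set m := n - r + 1 with hm
  have hr0 : 0 < r := by omega
  have har : r - 1 < r := by omega
  have hbr : r - 2 < r := by omega
  have haF : (⟨r - 1, har⟩ : Fin r) = a := by apply Fin.ext; simp [ha]
  have hbF : (⟨r - 2, hbr⟩ : Fin r) = b := by apply Fin.ext; simp [hb]
  have er1 : r - 2 + 1 = r - 1 := by omega
  -- choose the root sets
  obtain ⟨S, hSsub, hScard⟩ : ∃ S ⊆ Pf.erase 0, S.card = r - 2 := by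
    apply Finset.exists_subset_card_eq
    rw [Finset.card_erase_of_mem h0f, hPf]
    omega
  obtain ⟨T, hTsub, hTcard⟩ : ∃ T ⊆ Pg.erase 0, T.card = r - 2 := by
    apply Finset.exists_subset_card_eq
    rw [Finset.card_erase_of_mem h0g, hPg]
    omega
  have hSPf : S ⊆ Pf := hSsub.trans (Finset.erase_subset _ _)
  have hTPg : T ⊆ Pg := hTsub.trans (Finset.erase_subset _ _)
  have h0S : (0 : F) ∉ S := fun h => (Finset.mem_erase.mp (hSsub h)).1 rfl
  have h0T : (0 : F) ∉ T := fun h => (Finset.mem_erase.mp (hTsub h)).1 rfl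
  set A : F[X] := ∏ x ∈ S, (X - C x) with hAdef
  set Bq : F[X] := ∏ x ∈ T, (X - C x) with hBdef
  have hAmonic : A.Monic := monic_prod_of_monic _ _ fun x _ => monic_X_sub_C x
  have hBmonic : Bq.Monic := monic_prod_of_monic _ _ fun x _ => monic_X_sub_C x
  have hAdeg : A.natDegree = r - 2 := by
    rw [hAdef, Polynomial.natDegree_prod _ _ fun x _ => X_sub_C_ne_zero x]
    simp [Polynomial.natDegree_X_sub_C, hScard]
  have hBdeg : Bq.natDegree = r - 2 := by
    rw [hBdef, Polynomial.natDegree_prod _ _ fun x _ => X_sub_C_ne_zero x]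
    simp [Polynomial.natDegree_X_sub_C, hTcard]
  have hAeval : ∀ x, A.eval x = 0 ↔ x ∈ S := by
    intro x
    rw [hAdef, Polynomial.eval_prod, Finset.prod_eq_zero_iff]
    constructor
    · rintro ⟨y, hy, hy0⟩
      simp only [Polynomial.eval_sub, Polynomial.eval_X, Polynomial.eval_C, sub_eq_zero] at hy0
      rwa [hy0]
    · intro h
      exact ⟨x, h, by simp⟩
  have hBeval : ∀ x, Bq.eval x = 0 ↔ x ∈ T := by
    intro x
    rw [hBdef, Polynomial.eval_prod, Finset.prod_eq_zero_iff]
    constructor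
    · rintro ⟨y, hy, hy0⟩
      simp only [Polynomial.eval_sub, Polynomial.eval_X, Polynomial.eval_C, sub_eq_zero] at hy0
      rwa [hy0]
    · intro h
      exact ⟨x, h, by simp⟩
  have hAr2 : A.coeff (r - 2) = 1 := by
    have := hAmonic.coeff_natDegree; rwa [hAdeg] at this
  have hBr2 : Bq.coeff (r - 2) = 1 := by
    have := hBmonic.coeff_natDegree; rwa [hBdeg] at this
  have hAr1 : A.coeff (r - 1) = 0 := Polynomial.coeff_eq_zero_of_natDegree_lt (by omega)
  have hBr1 : Bq.coeff (r - 1) = 0 := Polynomial.coeff_eq_zero_of_natDegree_lt (by omega)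
  have hXAr1 : (X * A).coeff (r - 1) = 1 := by
    rw [← er1, Polynomial.coeff_X_mul, hAr2]
  have hXBr1 : (X * Bq).coeff (r - 1) = 1 := by
    rw [← er1, Polynomial.coeff_X_mul, hBr2]
  set c : Fin r → Fin r → F := fun i j =>
    (X * A).coeff (i : ℕ) * Bq.coeff (j : ℕ) + A.coeff (i : ℕ) * (X * Bq).coeff (j : ℕ)
    with hcdef
  refine ⟨c, ?_, ?_, ?_, ?_⟩
  · show (X * A).coeff (a : ℕ) * Bq.coeff (a : ℕ) + A.coeff (a : ℕ) * (X * Bq).coeff (a : ℕ) = 0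
    rw [ha, hXAr1, hBr1, hAr1]
    ring
  · show (X * A).coeff (a : ℕ) * Bq.coeff (b : ℕ) + A.coeff (a : ℕ) * (X * Bq).coeff (b : ℕ) = 1
    rw [ha, hb, hXAr1, hBr2, hAr1]
    ring
  · show (X * A).coeff (b : ℕ) * Bq.coeff (a : ℕ) + A.coeff (b : ℕ) * (X * Bq).coeff (a : ℕ) = 1
    rw [ha, hb, hBr1, hAr2, hXBr1]
    ring
  -- the weight computation
  have hevalfin : ∀ (q : F[X]), q.natDegree < r → ∀ x : F,
      q.eval x = ∑ i : Fin r, q.coeff (i : ℕ) * x ^ (i : ℕ) := by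
    intro q hq x
    rw [Polynomial.eval_eq_sum_range' hq, Fin.sum_univ_eq_sum_range fun i => q.coeff i * x ^ i]
  have hXAdeg : (X * A).natDegree < r := by
    rcases mul_ne_zero_iff.mp (mul_ne_zero X_ne_zero hAmonic.ne_zero) with _
    rw [Polynomial.natDegree_mul X_ne_zero hAmonic.ne_zero, Polynomial.natDegree_X]
    omega
  have hXBdeg : (X * Bq).natDegree < r := by
    rw [Polynomial.natDegree_mul X_ne_zero hBmonic.ne_zero, Polynomial.natDegree_X]
    omega
  have hbieval : ∀ γ β : F,
      (colPoly c γ).eval β = A.eval β * Bq.eval γ * (β + γ) := by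
    intro γ β
    have h1 : (colPoly c γ).eval β
        = ∑ i : Fin r, ∑ j : Fin r, c i j * γ ^ (j : ℕ) * β ^ (i : ℕ) := by
      rw [colPoly]
      rw [Polynomial.eval_finset_sum]
      apply Finset.sum_congr rfl
      intro i _
      rw [Polynomial.eval_monomial, rowPoly, Polynomial.eval_finset_sum, Finset.sum_mul]
      apply Finset.sum_congr rfl
      intro j _
      rw [Polynomial.eval_monomial]
    have h2 : ∀ (i j : Fin r), c i j * γ ^ (j : ℕ) * β ^ (i : ℕ)
        = ((X * A).coeff (i : ℕ) * β ^ (i : ℕ)) * (Bq.coeff (j : ℕ) * γ ^ (j : ℕ))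
          + (A.coeff (i : ℕ) * β ^ (i : ℕ)) * ((X * Bq).coeff (j : ℕ) * γ ^ (j : ℕ)) := by
      intro i j
      rw [hcdef]
      ring
    calc (colPoly c γ).eval β
        = ∑ i : Fin r, ∑ j : Fin r,
            (((X * A).coeff (i : ℕ) * β ^ (i : ℕ)) * (Bq.coeff (j : ℕ) * γ ^ (j : ℕ))
              + (A.coeff (i : ℕ) * β ^ (i : ℕ)) * ((X * Bq).coeff (j : ℕ) * γ ^ (j : ℕ))) := by
          rw [h1]
          exact Finset.sum_congr rfl fun i _ => Finset.sum_congr rfl fun j _ => h2 i j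
    _ = (∑ i : Fin r, (X * A).coeff (i : ℕ) * β ^ (i : ℕ))
          * (∑ j : Fin r, Bq.coeff (j : ℕ) * γ ^ (j : ℕ))
        + (∑ i : Fin r, A.coeff (i : ℕ) * β ^ (i : ℕ))
          * (∑ j : Fin r, (X * Bq).coeff (j : ℕ) * γ ^ (j : ℕ)) := by
          rw [Finset.sum_mul_sum, Finset.sum_mul_sum, ← Finset.sum_add_distrib]
          exact Finset.sum_congr rfl fun i _ => by rw [← Finset.sum_add_distrib]
    _ = (X * A).eval β * Bq.eval γ + A.eval β * (X * Bq).eval γ := by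
          rw [← hevalfin _ hXAdeg, ← hevalfin _ (by omega), ← hevalfin _ (by omega),
            ← hevalfin _ hXBdeg]
    _ = A.eval β * Bq.eval γ * (β + γ) := by
          simp only [Polynomial.eval_mul, Polynomial.eval_X]
          ring
  -- counts per column
  have hPfS : (Pf \ S).card = m + 1 := by
    rw [Finset.card_sdiff_of_subset hSPf, hPf, hScard]
    omega
  have h0PfS : (0 : F) ∈ Pf \ S := Finset.mem_sdiff.mpr ⟨h0f, h0S⟩
  have hcount0 : ∀ γ ∈ T, (Pf.filter fun β => (colPoly c γ).eval β ≠ 0).card = 0 := by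
    intro γ hγ
    rw [Finset.card_eq_zero, Finset.filter_eq_empty_iff]
    intro β _
    rw [hbieval γ β, (hBeval γ).mpr hγ]
    simp
  have hcount1 : ∀ γ ∈ Pg \ T, γ ≠ 0 →
      (Pf.filter fun β => (colPoly c γ).eval β ≠ 0) = Pf \ S := by
    intro γ hγ hγ0
    rw [Finset.mem_sdiff] at hγ
    ext β
    rw [Finset.mem_filter, Finset.mem_sdiff]
    constructor
    · rintro ⟨hβ, hne⟩
      refine ⟨hβ, fun hβS => hne ?_⟩
      rw [hbieval γ β, (hAeval β).mpr hβS]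
      ring
    · rintro ⟨hβ, hβS⟩
      refine ⟨hβ, ?_⟩
      rw [hbieval γ β]
      have hA0 : A.eval β ≠ 0 := fun h => hβS ((hAeval β).mp h)
      have hB0 : Bq.eval γ ≠ 0 := fun h => hγ.2 ((hBeval γ).mp h)
      have hsum0 : β + γ ≠ 0 := by
        intro h
        have h00 : β + γ = 0 + 0 := by rw [h, add_zero]
        exact hγ0 (hinj β hβ γ hγ.1 0 h0f 0 h0g h00).2
      exact mul_ne_zero (mul_ne_zero hA0 hB0) hsum0
  have hcount2 : (Pf.filter fun β => (colPoly c 0).eval β ≠ 0) = (Pf \ S).erase 0 := by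
    ext β
    rw [Finset.mem_filter, Finset.mem_erase, Finset.mem_sdiff]
    constructor
    · rintro ⟨hβ, hne⟩
      have hA0 : A.eval β ≠ 0 := by
        intro h
        apply hne
        rw [hbieval 0 β, h]
        ring
      have hβ0 : β ≠ 0 := by
        intro h
        apply hne
        rw [hbieval 0 β, h]
        ring
      exact ⟨hβ0, hβ, fun hβS => hA0 ((hAeval β).mpr hβS)⟩
    · rintro ⟨hβ0, hβ, hβS⟩
      refine ⟨hβ, ?_⟩
      rw [hbieval 0 β]
      have hA0 : A.eval β ≠ 0 := fun h => hβS ((hAeval β).mp h)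
      have hB0 : Bq.eval (0 : F) ≠ 0 := fun h => h0T ((hBeval 0).mp h)
      have : β + 0 ≠ 0 := by simpa using hβ0
      exact mul_ne_zero (mul_ne_zero hA0 hB0) this
  -- total sum
  have h0PgT : (0 : F) ∈ Pg \ T := Finset.mem_sdiff.mpr ⟨h0g, h0T⟩
  have hstep1 : ∑ γ ∈ Pg, (Pf.filter fun β => (colPoly c γ).eval β ≠ 0).card
      = ∑ γ ∈ Pg \ T, (Pf.filter fun β => (colPoly c γ).eval β ≠ 0).card := by
    symm
    apply Finset.sum_subset (Finset.sdiff_subset)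
    intro γ hγ hγ2
    apply hcount0
    rw [Finset.mem_sdiff] at hγ2
    by_contra h
    exact hγ2 ⟨hγ, h⟩
  have hstep2 : ∑ γ ∈ Pg \ T, (Pf.filter fun β => (colPoly c γ).eval β ≠ 0).card
      = ∑ γ ∈ (Pg \ T).erase 0, (Pf.filter fun β => (colPoly c γ).eval β ≠ 0).card
        + (Pf.filter fun β => (colPoly c 0).eval β ≠ 0).card :=
    (Finset.sum_erase_add _ _ h0PgT).symm
  have hstep3 : ∑ γ ∈ (Pg \ T).erase 0, (Pf.filter fun β => (colPoly c γ).eval β ≠ 0).card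
      = ((Pg \ T).erase 0).card * (m + 1) := by
    rw [Finset.sum_congr rfl fun γ hγ => ?_, Finset.sum_const, smul_eq_mul]
    rw [Finset.mem_erase] at hγ
    rw [hcount1 γ hγ.2 hγ.1, hPfS]
  have hPgT : ((Pg \ T).erase 0).card = m := by
    rw [Finset.card_erase_of_mem h0PgT, Finset.card_sdiff_of_subset hTPg, hPg, hTcard]
    omega
  have hcount2' : (Pf.filter fun β => (colPoly c 0).eval β ≠ 0).card = m := by
    rw [hcount2, Finset.card_erase_of_mem h0PfS, hPfS]
    omega
  rw [hstep1, hstep2, hstep3, hPgT, hcount2']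
  ring
end Stmt13Aux

open Stmt13Aux in
/-- two heavy parities.  Under the construction setup with `3 ≤ r ≤ 𝔫`
and `δ := 𝔫 − r + 1`, the evaluation code on `Z_f ⊕ Z_g` of
`{w ∈ span_F(B_{r²}) : deg w ≤ (2r−4)·𝔫 + 1}` has dimension `r² − 2` and minimum distance
exactly `δ(δ+2)`. -/
theorem stmt_13 (p e : ℕ) (hp : p.Prime) (he : 0 < e)
    (F : Type*) [Field F] [Fintype F] [CharP F p]
    (f : F[X])
    (hflin : ∀ m ∈ f.support, ∃ i : ℕ, m = (p ^ e) ^ i)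
    (hdeg : 1 < f.natDegree)
    (ha0 : f.coeff 1 ≠ 0) (ha1 : f.coeff 1 ≠ 1)
    (g : F[X]) (hg : g = X - f)
    (hfs : (f.map (RingHom.id F)).Splits) (hgs : (g.map (RingHom.id F)).Splits)
    (r : ℕ) (hr : 3 ≤ r) (hrn : r ≤ f.natDegree)
    (C : Submodule F (↥(rootSumSet f g) → F))
    (hC : C = Submodule.map (evalOn (rootSumSet f g))
      (Submodule.span F (Bset f g r) ⊓
        Polynomial.degreeLE F (((2 * r - 4) * f.natDegree + 1 : ℕ) : WithBot ℕ))) :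
    Module.finrank F ↥C = r ^ 2 - 2 ∧
    IsLeast {w : ℕ | ∃ v ∈ C, v ≠ 0 ∧
        (Finset.univ.filter fun α : ↥(rootSumSet f g) => v α ≠ 0).card = w}
      ((f.natDegree - r + 1) * (f.natDegree - r + 1 + 2)) := by
  classical
  haveI := Fact.mk hp
  set n := f.natDegree with hn
  have hn3 : 3 ≤ n := hr.trans hrn
  have hf0 : f ≠ 0 := fun h => ha0 (by simp [h])
  set L := f.leadingCoeff with hLdef
  have hLne : L ≠ 0 := Polynomial.leadingCoeff_ne_zero.mpr hf0
  have hcoeff0 : f.coeff 0 = 0 := by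
    by_contra h
    obtain ⟨i, hi⟩ := hflin 0 (Polynomial.mem_support_iff.mpr h)
    have hpos : 0 < (p ^ e) ^ i := pow_pos (pow_pos hp.pos e) i
    omega
  have hpow : ∀ m ∈ f.support, ∀ x y : F, (x + y) ^ m = x ^ m + y ^ m := by
    intro m hm x y
    obtain ⟨i, rfl⟩ := hflin m hm
    rw [← pow_mul]
    exact add_pow_char_pow x y p (e * i)
  have hfadd : ∀ x y : F, f.eval (x + y) = f.eval x + f.eval y := by
    intro x y
    rw [Polynomial.eval_eq_sum, Polynomial.eval_eq_sum, Polynomial.eval_eq_sum,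
      Polynomial.sum_def, Polynomial.sum_def, Polynomial.sum_def, ← Finset.sum_add_distrib]
    apply Finset.sum_congr rfl
    intro m hm
    rw [hpow m hm x y, mul_add]
  have hgeval : ∀ x : F, g.eval x = x - f.eval x := by intro x; rw [hg]; simp
  have hgadd : ∀ x y : F, g.eval (x + y) = g.eval x + g.eval y := by
    intro x y; rw [hgeval, hgeval, hgeval, hfadd]; ring
  have hfsub : ∀ x y : F, f.eval (x - y) = f.eval x - f.eval y := by
    intro x y
    have h1 := hfadd (x - y) y
    rw [sub_add_cancel] at h1
    linear_combination -h1
  have hgsub : ∀ x y : F, g.eval (x - y) = g.eval x - g.eval y := by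
    intro x y; rw [hgeval, hgeval, hgeval, hfsub]; ring
  have hdegf : f.degree = (n : WithBot ℕ) := Polynomial.degree_eq_natDegree hf0
  have hgdegree : g.degree = f.degree := by
    rw [hg]
    apply Polynomial.degree_sub_eq_right_of_degree_lt
    rw [hdegf, Polynomial.degree_X]
    exact_mod_cast (by omega : 1 < n)
  have hgne : g ≠ 0 := by
    intro h
    rw [h, Polynomial.degree_zero, hdegf] at hgdegree
    exact absurd hgdegree.symm (by simp)
  have hgnat : g.natDegree = n := by
    rw [hn]; exact Polynomial.natDegree_eq_of_degree_eq hgdegree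
  have hglc : g.leadingCoeff = -L := by
    rw [Polynomial.leadingCoeff, hgnat, hg, Polynomial.coeff_sub, Polynomial.coeff_X,
      if_neg (by omega : ¬ 1 = n)]
    rw [hLdef, Polynomial.leadingCoeff, ← hn]
    ring
  have hderivf : Polynomial.derivative f = Polynomial.C (f.coeff 1) := by
    ext k
    rw [Polynomial.coeff_derivative, Polynomial.coeff_C]
    split
    · next h => rw [h]; push_cast; ring
    · next h =>
      by_cases hmem : (k + 1) ∈ f.support
      · obtain ⟨i, hi⟩ := hflin _ hmem
        rw [← pow_mul] at hi
        have hei : e * i ≠ 0 := by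
          intro h0
          rw [h0, pow_zero] at hi
          omega
        have hdvd : p ∣ k + 1 := hi ▸ dvd_pow_self p hei
        have hcast : ((k : F) + 1) = 0 := by
          have h2 := (CharP.cast_eq_zero_iff F p (k + 1)).mpr hdvd
          push_cast at h2
          linear_combination h2
        rw [hcast, mul_zero]
      · rw [Polynomial.notMem_support_iff.mp hmem, zero_mul]
  have hsepf : f.Separable := by
    rw [Polynomial.Separable, hderivf]
    exact ⟨0, Polynomial.C (f.coeff 1)⁻¹, by
      rw [zero_mul, zero_add, ← Polynomial.C_mul, inv_mul_cancel₀ ha0, Polynomial.C_1]⟩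
  have h1a : (1 : F) - f.coeff 1 ≠ 0 := sub_ne_zero.mpr (Ne.symm ha1)
  have hderivg : Polynomial.derivative g = Polynomial.C (1 - f.coeff 1) := by
    rw [hg, Polynomial.derivative_sub, Polynomial.derivative_X, hderivf,
      Polynomial.C_sub, Polynomial.C_1]
  have hsepg : g.Separable := by
    rw [Polynomial.Separable, hderivg]
    exact ⟨0, Polynomial.C (1 - f.coeff 1)⁻¹, by
      rw [zero_mul, zero_add, ← Polynomial.C_mul, inv_mul_cancel₀ h1a, Polynomial.C_1]⟩
  set Pf := f.roots.toFinset with hPfdef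
  set Pg := g.roots.toFinset with hPgdef
  have hPfcard : Pf.card = n := by
    rw [hPfdef, Multiset.toFinset_card_of_nodup (Polynomial.nodup_roots hsepf),
      (Polynomial.splits_iff_card_roots (f := f)).mp (by simpa using hfs)]
  have hPgcard : Pg.card = n := by
    rw [hPgdef, Multiset.toFinset_card_of_nodup (Polynomial.nodup_roots hsepg),
      (Polynomial.splits_iff_card_roots (f := g)).mp (by simpa using hgs), hgnat]
  have hfz : ∀ β ∈ Pf, f.eval β = 0 := fun β hβ =>
    (Polynomial.mem_roots'.mp (Multiset.mem_toFinset.mp hβ)).2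
  have hgz : ∀ γ ∈ Pg, g.eval γ = 0 := fun γ hγ =>
    (Polynomial.mem_roots'.mp (Multiset.mem_toFinset.mp hγ)).2
  have hfead : ∀ γ ∈ Pg, f.eval γ = γ := by
    intro γ hγ
    have h1 := hgz γ hγ
    rw [hgeval] at h1
    linear_combination -h1
  have hevg : ∀ β ∈ Pf, ∀ γ ∈ Pg, g.eval (β + γ) = β := by
    intro β hβ γ hγ
    rw [hgadd, hgz γ hγ, add_zero, hgeval, hfz β hβ, sub_zero]
  have hevf : ∀ β ∈ Pf, ∀ γ ∈ Pg, f.eval (β + γ) = γ := by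
    intro β hβ γ hγ
    rw [hfadd, hfz β hβ, zero_add, hfead γ hγ]
  have hinj : ∀ β ∈ Pf, ∀ γ ∈ Pg, ∀ β' ∈ Pf, ∀ γ' ∈ Pg,
      β + γ = β' + γ' → β = β' ∧ γ = γ' := by
    intro β hβ γ hγ β' hβ' γ' hγ' hsum
    have hd : β - β' = γ' - γ := by linear_combination hsum
    have hfd : f.eval (β - β') = 0 := by rw [hfsub, hfz β hβ, hfz β' hβ']; ring
    have hgd : g.eval (β - β') = 0 := by rw [hd, hgsub, hgz γ' hγ', hgz γ hγ]; ring
    rw [hgeval, hfd, sub_zero, sub_eq_zero] at hgd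
    exact ⟨hgd, by rw [hgd] at hsum; exact add_left_cancel hsum⟩
  have h0f : (0 : F) ∈ Pf := by
    rw [hPfdef, Multiset.mem_toFinset, Polynomial.mem_roots hf0]
    rw [Polynomial.IsRoot, ← Polynomial.coeff_zero_eq_eval_zero]
    exact hcoeff0
  have h0g : (0 : F) ∈ Pg := by
    rw [hPgdef, Multiset.mem_toFinset, Polynomial.mem_roots hgne]
    rw [Polynomial.IsRoot]
    rw [hgeval, ← Polynomial.coeff_zero_eq_eval_zero, hcoeff0, sub_zero]
  have hSSdef : rootSumSet f g = (Pf ×ˢ Pg).image fun z => z.1 + z.2 := rfl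
  have hmem : ∀ β ∈ Pf, ∀ γ ∈ Pg, β + γ ∈ rootSumSet f g := by
    intro β hβ γ hγ
    rw [hSSdef]
    exact Finset.mem_image.mpr ⟨(β, γ), Finset.mem_product.mpr ⟨hβ, hγ⟩, rfl⟩
  have har : r - 1 < r := by omega
  have hbr : r - 2 < r := by omega
  set a : Fin r := ⟨r - 1, har⟩ with hadef
  set b : Fin r := ⟨r - 2, hbr⟩ with hbdef
  have haval : (a : ℕ) = r - 1 := rfl
  have hbval : (b : ℕ) = r - 2 := rfl
  have hab : a ≠ b := by
    intro h
    have h2 := congrArg Fin.val h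
    rw [haval, hbval] at h2
    omega
  set Φ := PhiLin f g r with hΦdef
  set Ψ := (evalOn (rootSumSet f g)).comp Φ with hΨdef
  set Um := LinearMap.ker (lamLin (F := F) r a b) with hUmdef
  have hUmem : ∀ c : Fin r → Fin r → F, c ∈ Um ↔ c a a = 0 ∧ c a b = c b a := by
    intro c
    rw [hUmdef, LinearMap.mem_ker]
    constructor
    · intro h
      have h1 := congrArg Prod.fst h
      have h2 := congrArg Prod.snd h
      simp only [lamLin, LinearMap.coe_mk, AddHom.coe_mk, Prod.fst_zero, Prod.snd_zero] at h1 h2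
      exact ⟨h1, sub_eq_zero.mp h2⟩
    · rintro ⟨h1, h2⟩
      have : lamLin (F := F) r a b c = (c a a, c a b - c b a) := rfl
      rw [this, h1, h2, sub_self]
      rfl
  -- evaluation identity
  have hPhieval : ∀ (c : Fin r → Fin r → F) (β γ : F), β ∈ Pf → γ ∈ Pg →
      (Φ c).eval (β + γ) = (colPoly c γ).eval β := by
    intro c β γ hβ hγ
    rw [hΦdef, PhiLin_apply]
    rw [Polynomial.eval_finset_sum]
    have hcol : (colPoly c γ).eval β
        = ∑ i : Fin r, ∑ j : Fin r, c i j * γ ^ (j : ℕ) * β ^ (i : ℕ) := by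
      rw [colPoly, Polynomial.eval_finset_sum]
      apply Finset.sum_congr rfl
      intro i _
      rw [Polynomial.eval_monomial, rowPoly, Polynomial.eval_finset_sum, Finset.sum_mul]
      apply Finset.sum_congr rfl
      intro j _
      rw [Polynomial.eval_monomial]
    rw [hcol]
    apply Finset.sum_congr rfl
    intro i _
    rw [Polynomial.eval_finset_sum]
    apply Finset.sum_congr rfl
    intro j _
    rw [Polynomial.eval_smul, smul_eq_mul, Polynomial.eval_mul, Polynomial.eval_pow,
      Polynomial.eval_pow, hevg β hβ γ hγ, hevf β hβ γ hγ]
    ring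
  have hspan : Submodule.span F (Bset f g r) = LinearMap.range Φ := by
    apply le_antisymm
    · rw [Submodule.span_le]
      rintro w ⟨i, j, hi, hj, rfl⟩
      refine ⟨fun i' j' => if i' = ⟨i, hi⟩ ∧ j' = ⟨j, hj⟩ then 1 else 0, ?_⟩
      rw [hΦdef, PhiLin_single]
      simp
    · rintro w ⟨c, rfl⟩
      rw [hΦdef, PhiLin_apply]
      apply Submodule.sum_mem
      intro i _
      apply Submodule.sum_mem
      intro j _
      apply Submodule.smul_mem
      apply Submodule.subset_span
      exact ⟨(i : ℕ), (j : ℕ), i.isLt, j.isLt, rfl⟩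
  -- degrees and leading coefficients of g^i f^j
  have hfgdeg : ∀ i j : ℕ, (g ^ i * f ^ j).natDegree = (i + j) * n := by
    intro i j
    rw [Polynomial.natDegree_mul (pow_ne_zero _ hgne) (pow_ne_zero _ hf0),
      Polynomial.natDegree_pow, Polynomial.natDegree_pow, hgnat, ← hn]
    ring
  have hfgne : ∀ i j : ℕ, g ^ i * f ^ j ≠ 0 := fun i j =>
    mul_ne_zero (pow_ne_zero _ hgne) (pow_ne_zero _ hf0)
  have hfglc : ∀ i j : ℕ, (g ^ i * f ^ j).leadingCoeff = (-1) ^ i * L ^ (i + j) := by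
    intro i j
    rw [Polynomial.leadingCoeff_mul, Polynomial.leadingCoeff_pow, Polynomial.leadingCoeff_pow,
      hglc, ← hLdef, neg_pow, pow_add]
    ring
  have hn0 : 0 < n := by omega
  have hne_a : ∀ i : Fin r, i ≠ a → (i : ℕ) ≤ r - 2 := by
    intro i hi
    have h1 := i.isLt
    have h2 : (i : ℕ) ≠ r - 1 := fun h => hi (Fin.ext (by rw [haval]; exact h))
    omega
  have hne_b : ∀ i : Fin r, i ≠ b → (i : ℕ) ≠ r - 2 := by
    intro i hi h
    exact hi (Fin.ext (by rw [hbval]; exact h))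
  have hcoeffPhi : ∀ (c : Fin r → Fin r → F) (N : ℕ),
      (Φ c).coeff N = ∑ i : Fin r, ∑ j : Fin r, c i j * (g ^ (i : ℕ) * f ^ (j : ℕ)).coeff N := by
    intro c N
    rw [hΦdef, PhiLin_apply, Polynomial.finset_sum_coeff]
    apply Finset.sum_congr rfl
    intro i _
    rw [Polynomial.finset_sum_coeff]
    apply Finset.sum_congr rfl
    intro j _
    rw [Polynomial.coeff_smul, smul_eq_mul]
  have hvanish : ∀ (i j : Fin r) (s : ℕ), (i : ℕ) + (j : ℕ) < s →
      (g ^ (i : ℕ) * f ^ (j : ℕ)).coeff (s * n) = 0 := by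
    intro i j s hs
    apply Polynomial.coeff_eq_zero_of_natDegree_lt
    rw [hfgdeg]
    exact Nat.mul_lt_mul_of_lt_of_le hs (le_refl n) hn0
  have htopcoeff : ∀ i j : Fin r,
      (g ^ (i : ℕ) * f ^ (j : ℕ)).coeff (((i : ℕ) + (j : ℕ)) * n)
        = (-1) ^ (i : ℕ) * L ^ ((i : ℕ) + (j : ℕ)) := by
    intro i j
    rw [← hfgdeg, Polynomial.coeff_natDegree, hfglc]
  have hc1 : ∀ c : Fin r → Fin r → F,
      (Φ c).coeff ((2 * r - 2) * n) = c a a * ((-1) ^ (r - 1) * L ^ (2 * r - 2)) := by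
    intro c
    rw [hcoeffPhi]
    rw [Finset.sum_eq_single a]
    · rw [Finset.sum_eq_single a]
      · have hdeq : (2 * r - 2) * n = ((a : ℕ) + (a : ℕ)) * n := by
          rw [haval]; congr 1; omega
        rw [hdeq, htopcoeff, haval]
        have h5 : r - 1 + (r - 1) = 2 * r - 2 := by omega
        rw [h5]
      · intro j _ hj
        rw [hvanish a j (2 * r - 2) (by have := hne_a j hj; rw [haval]; omega), mul_zero]
      · intro h; exact absurd (Finset.mem_univ a) h
    · intro i _ hi
      apply Finset.sum_eq_zero
      intro j _
      rw [hvanish i j (2 * r - 2) (by have := hne_a i hi; have := j.isLt; omega), mul_zero]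
    · intro h; exact absurd (Finset.mem_univ a) h
  have hc2 : ∀ c : Fin r → Fin r → F, c a a = 0 →
      (Φ c).coeff ((2 * r - 3) * n)
        = c a b * ((-1) ^ (r - 1) * L ^ (2 * r - 3))
          + c b a * ((-1) ^ (r - 2) * L ^ (2 * r - 3)) := by
    intro c hcaa
    rw [hcoeffPhi]
    rw [← Finset.sum_subset (Finset.subset_univ {a, b}) (fun i _ hi => ?_)]
    · rw [Finset.sum_pair hab]
      have hA : ∑ j : Fin r, c a j * (g ^ (a : ℕ) * f ^ (j : ℕ)).coeff ((2 * r - 3) * n)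
          = c a b * ((-1) ^ (r - 1) * L ^ (2 * r - 3)) := by
        rw [Finset.sum_eq_single b]
        · have hdeq : (2 * r - 3) * n = ((a : ℕ) + (b : ℕ)) * n := by
            rw [haval, hbval]; congr 1; omega
          rw [hdeq, htopcoeff, haval, hbval]
          have h5 : r - 1 + (r - 2) = 2 * r - 3 := by omega
          rw [h5]
        · intro j _ hj
          by_cases hja : j = a
          · rw [hja, hcaa, zero_mul]
          · rw [hvanish a j (2 * r - 3)
              (by have := hne_a j hja; have := hne_b j hj; rw [haval]; omega), mul_zero]
        · intro h; exact absurd (Finset.mem_univ b) h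
      have hB : ∑ j : Fin r, c b j * (g ^ (b : ℕ) * f ^ (j : ℕ)).coeff ((2 * r - 3) * n)
          = c b a * ((-1) ^ (r - 2) * L ^ (2 * r - 3)) := by
        rw [Finset.sum_eq_single a]
        · have hdeq : (2 * r - 3) * n = ((b : ℕ) + (a : ℕ)) * n := by
            rw [haval, hbval]; congr 1; omega
          rw [hdeq, htopcoeff, haval, hbval]
          have h5 : r - 2 + (r - 1) = 2 * r - 3 := by omega
          rw [h5]
        · intro j _ hj
          rw [hvanish b j (2 * r - 3)
            (by have := hne_a j hj; have := j.isLt; rw [hbval]; omega), mul_zero]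
        · intro h; exact absurd (Finset.mem_univ a) h
      rw [hA, hB]
    · simp only [Finset.mem_insert, Finset.mem_singleton] at hi
      push_neg at hi
      apply Finset.sum_eq_zero
      intro j _
      rw [hvanish i j (2 * r - 3)
        (by have h5 := hne_a i hi.1; have h6 := hne_b i hi.2; have := j.isLt; omega), mul_zero]
  have hsum3 : g ^ (r - 1) * f ^ (r - 2) + g ^ (r - 2) * f ^ (r - 1)
      = g ^ (r - 2) * f ^ (r - 2) * X := by
    have hgf : g + f = X := by rw [hg]; ring
    have e1 : r - 1 = r - 2 + 1 := by omega
    rw [e1, pow_succ, pow_succ, ← hgf]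
    ring
  have hdecomp : ∀ c : Fin r → Fin r → F, c ∈ Um → Φ c =
      Φ (fun i j => if (i = a ∧ j = a) ∨ (i = a ∧ j = b) ∨ (i = b ∧ j = a) then 0 else c i j)
        + c a b • (g ^ (r - 1) * f ^ (r - 2) + g ^ (r - 2) * f ^ (r - 1)) := by
    intro c hc
    obtain ⟨hcaa, hctie⟩ := (hUmem c).mp hc
    have hsplit : c = (fun i j =>
          if (i = a ∧ j = a) ∨ (i = a ∧ j = b) ∨ (i = b ∧ j = a) then 0 else c i j)
        + (c a b • fun i' j' => if i' = a ∧ j' = b then (1 : F) else 0)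
        + (c a b • fun i' j' => if i' = b ∧ j' = a then (1 : F) else 0) := by
      funext i j
      simp only [Pi.add_apply, Pi.smul_apply, smul_eq_mul, mul_ite, mul_one, mul_zero]
      by_cases hia : i = a
      · subst hia
        by_cases hja : j = a
        · subst hja
          simp [hab, Ne.symm hab, hcaa]
        · by_cases hjb : j = b
          · subst hjb
            simp [hab, Ne.symm hab]
          · simp [hja, hjb, hab]
      · by_cases hib : i = b
        · subst hib
          by_cases hja : j = a
          · subst hja
            simp [hab, Ne.symm hab, ← hctie]
          · simp [hia, hja, hab]
        · simp [hia, hib]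
    calc Φ c = Φ (fun i j =>
            if (i = a ∧ j = a) ∨ (i = a ∧ j = b) ∨ (i = b ∧ j = a) then 0 else c i j)
          + c a b • Φ (fun i' j' => if i' = a ∧ j' = b then (1 : F) else 0)
          + c a b • Φ (fun i' j' => if i' = b ∧ j' = a then (1 : F) else 0) := by
          conv_lhs => rw [hsplit]
          rw [map_add, map_add, map_smul, map_smul]
    _ = _ := by
          rw [hΦdef, PhiLin_single, PhiLin_single, one_smul, one_smul, haval, hbval,
            smul_add, add_assoc]
  have hdegUb : ∀ c ∈ Um, (Φ c).natDegree ≤ (2 * r - 4) * n + 1 := by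
    intro c hc
    rw [hdecomp c hc]
    apply le_trans (Polynomial.natDegree_add_le _ _)
    apply max_le
    · refine le_trans ?_ (Nat.le_succ _)
      rw [hΦdef, PhiLin_apply]
      apply Polynomial.natDegree_sum_le_of_forall_le
      intro i _
      apply Polynomial.natDegree_sum_le_of_forall_le
      intro j _
      by_cases hheavy : (i = a ∧ j = a) ∨ (i = a ∧ j = b) ∨ (i = b ∧ j = a)
      · rw [if_pos hheavy, zero_smul, Polynomial.natDegree_zero]
        exact Nat.zero_le _
      · rw [if_neg hheavy]
        apply le_trans (Polynomial.natDegree_smul_le _ _)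
        rw [hfgdeg]
        have hij : (i : ℕ) + (j : ℕ) ≤ 2 * r - 4 := by
          by_contra hgt
          push_neg at hgt
          have h1 := i.isLt
          have h2 := j.isLt
          apply hheavy
          rcases (by omega : ((i : ℕ) = r - 1 ∧ (j : ℕ) = r - 1)
              ∨ ((i : ℕ) = r - 1 ∧ (j : ℕ) = r - 2)
              ∨ ((i : ℕ) = r - 2 ∧ (j : ℕ) = r - 1)) with h | h | h
          · exact Or.inl ⟨Fin.ext (by rw [haval]; exact h.1),
              Fin.ext (by rw [haval]; exact h.2)⟩
          · exact Or.inr (Or.inl ⟨Fin.ext (by rw [haval]; exact h.1),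
              Fin.ext (by rw [hbval]; exact h.2)⟩)
          · exact Or.inr (Or.inr ⟨Fin.ext (by rw [hbval]; exact h.1),
              Fin.ext (by rw [haval]; exact h.2)⟩)
        exact Nat.mul_le_mul_right n hij
    · apply le_trans (Polynomial.natDegree_smul_le _ _)
      rw [hsum3]
      have h5 : (g ^ (r - 2) * f ^ (r - 2)).natDegree = (2 * r - 4) * n := by
        rw [hfgdeg]
        congr 1
        omega
      refine le_trans Polynomial.natDegree_mul_le ?_
      rw [h5, Polynomial.natDegree_X]
  have hCeq : C = Submodule.map Ψ Um := by
    rw [hC]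
    apply le_antisymm
    · rintro v ⟨w, hwM, rfl⟩
      obtain ⟨hwspan, hwdeg'⟩ := hwM
      have hwdeg : w.natDegree ≤ (2 * r - 4) * n + 1 :=
        Polynomial.natDegree_le_iff_degree_le.mpr (Polynomial.mem_degreeLE.mp hwdeg')
      rw [hspan] at hwspan
      obtain ⟨c, rfl⟩ := hwspan
      have hlt1 : (2 * r - 4) * n + 1 < (2 * r - 2) * n := by
        have h5 : (2 * r - 2) * n = (2 * r - 4) * n + 2 * n := by
          have h6 : 2 * r - 2 = (2 * r - 4) + 2 := by omega
          rw [h6, Nat.add_mul]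
        omega
      have hlt2 : (2 * r - 4) * n + 1 < (2 * r - 3) * n := by
        have h5 : (2 * r - 3) * n = (2 * r - 4) * n + n := by
          have h6 : 2 * r - 3 = (2 * r - 4) + 1 := by omega
          rw [h6, Nat.add_mul, one_mul]
        omega
      have hz1 : (Φ c).coeff ((2 * r - 2) * n) = 0 :=
        Polynomial.coeff_eq_zero_of_natDegree_lt (by omega)
      have hz2 : (Φ c).coeff ((2 * r - 3) * n) = 0 :=
        Polynomial.coeff_eq_zero_of_natDegree_lt (by omega)
      rw [hc1 c] at hz1
      have hxne : ∀ k : ℕ, ((-1 : F)) ^ k * L ^ (2 * r - 3) ≠ 0 := fun k =>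
        mul_ne_zero (pow_ne_zero _ (neg_ne_zero.mpr one_ne_zero)) (pow_ne_zero _ hLne)
      have hcaa : c a a = 0 := by
        rcases mul_eq_zero.mp hz1 with h | h
        · exact h
        · exact absurd h (mul_ne_zero (pow_ne_zero _ (neg_ne_zero.mpr one_ne_zero))
            (pow_ne_zero _ hLne))
      rw [hc2 c hcaa] at hz2
      have hctie : c a b = c b a := by
        have hsign : (-1 : F) ^ (r - 1) = -((-1 : F) ^ (r - 2)) := by
          have e1 : r - 1 = (r - 2) + 1 := by omega
          rw [e1, pow_succ]
          ring
        have h6 : (c b a - c a b) * ((-1 : F) ^ (r - 2) * L ^ (2 * r - 3)) = 0 := by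
          linear_combination hz2 - (c a b * L ^ (2 * r - 3)) * hsign
        rcases mul_eq_zero.mp h6 with h | h
        · exact (sub_eq_zero.mp h).symm
        · exact absurd h (hxne _)
      exact ⟨c, (hUmem c).mpr ⟨hcaa, hctie⟩, rfl⟩
    · rintro v ⟨c, hcU, rfl⟩
      refine ⟨Φ c, ⟨?_, ?_⟩, rfl⟩
      · rw [hspan]
        exact ⟨c, rfl⟩
      · exact Polynomial.mem_degreeLE.mpr
          (Polynomial.natDegree_le_iff_degree_le.mp (hdegUb c hcU))
  have hΨapp : ∀ (c : Fin r → Fin r → F) (α : ↥(rootSumSet f g)),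
      Ψ c α = (Φ c).eval (α : F) := by
    intro c α
    rfl
  have hPsiinj : Function.Injective Ψ := by
    rw [← LinearMap.ker_eq_bot]
    apply LinearMap.ker_eq_bot'.mpr
    intro c hc0
    have hcol0 : ∀ γ ∈ Pg, ∀ β ∈ Pf, (colPoly c γ).eval β = 0 := by
      intro γ hγ β hβ
      have h1 : Ψ c ⟨β + γ, hmem β hβ γ hγ⟩ = 0 := by rw [hc0]; rfl
      rw [hΨapp] at h1
      rw [← hPhieval c β γ hβ hγ]
      exact h1
    have hrow0 : ∀ (i : Fin r), ∀ γ ∈ Pg, (rowPoly c i).eval γ = 0 := by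
      intro i γ hγ
      have hcz : colPoly c γ = 0 := by
        apply poly_eq_zero_of_card (P := Pf)
        · rw [hPfcard]
          exact lt_of_lt_of_le (natDegree_sum_monomial_lt _ (by omega)) hrn
        · exact fun β hβ => hcol0 γ hγ β hβ
      rw [← colPoly_coeff c γ i, hcz, Polynomial.coeff_zero]
    funext i j
    show c i j = 0
    have hrz : rowPoly c i = 0 := by
      apply poly_eq_zero_of_card (P := Pg)
      · rw [hPgcard]
        exact lt_of_lt_of_le (natDegree_sum_monomial_lt _ (by omega)) hrn
      · exact hrow0 i
    rw [← rowPoly_coeff c i j, hrz, Polynomial.coeff_zero]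
  have hfinUm : Module.finrank F ↥Um = r ^ 2 - 2 := by
    have hsurj : Function.Surjective (lamLin (F := F) r a b) := by
      intro z
      refine ⟨fun i j => if i = a ∧ j = a then z.1 else if i = a ∧ j = b then z.2 else 0, ?_⟩
      have h1 : lamLin (F := F) r a b
          (fun i j => if i = a ∧ j = a then z.1 else if i = a ∧ j = b then z.2 else 0)
          = ((if a = a ∧ a = a then z.1 else if a = a ∧ a = b then z.2 else 0),
            (if a = a ∧ b = a then z.1 else if a = a ∧ b = b then z.2 else 0)
              - (if b = a ∧ a = a then z.1 else if b = a ∧ a = b then z.2 else 0)) := rfl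
      rw [h1]
      have e1 : (if a = a ∧ a = a then z.1 else if a = a ∧ a = b then z.2 else 0) = z.1 := by
        rw [if_pos ⟨rfl, rfl⟩]
      have e2 : (if a = a ∧ b = a then z.1 else if a = a ∧ b = b then z.2 else 0) = z.2 := by
        rw [if_neg (fun h => hab h.2.symm), if_pos ⟨rfl, rfl⟩]
      have e3 : (if b = a ∧ a = a then z.1 else if b = a ∧ a = b then z.2 else 0) = 0 := by
        rw [if_neg (fun h => hab h.1.symm), if_neg (fun h => hab h.1.symm)]
      rw [e1, e2, e3, sub_zero]
    have hrange : LinearMap.range (lamLin (F := F) r a b) = ⊤ :=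
      LinearMap.range_eq_top.mpr hsurj
    have hrank := LinearMap.finrank_range_add_finrank_ker (lamLin (F := F) r a b)
    rw [hrange, finrank_top, Module.finrank_prod, Module.finrank_self] at hrank
    have hdom : Module.finrank F (Fin r → Fin r → F) = r * r := by
      rw [Module.finrank_pi_fintype]
      have h5 : ∀ i : Fin r, Module.finrank F (Fin r → F) = r := fun _ => by
        rw [Module.finrank_pi]
        simp
      rw [Finset.sum_congr rfl fun i _ => h5 i, Finset.sum_const, smul_eq_mul]
      simp
    rw [hdom] at hrank
    have hsq : r ^ 2 = r * r := sq r
    rw [hUmdef]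
    omega
  have hfinC : Module.finrank F ↥C = r ^ 2 - 2 := by
    rw [hCeq, ← hfinUm]
    exact (LinearEquiv.finrank_eq (Submodule.equivMapOfInjective Ψ hPsiinj Um)).symm
  have hwt : ∀ c : Fin r → Fin r → F,
      (Finset.univ.filter fun α : ↥(rootSumSet f g) => Ψ c α ≠ 0).card
        = ∑ γ ∈ Pg, (Pf.filter fun β => (colPoly c γ).eval β ≠ 0).card := by
    intro c
    have h1 : ((Pf ×ˢ Pg).filter fun z => (colPoly c z.2).eval z.1 ≠ 0).card
        = ∑ γ ∈ Pg, (Pf.filter fun β => (colPoly c γ).eval β ≠ 0).card :=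
      card_filter_product Pf Pg fun β γ => (colPoly c γ).eval β ≠ 0
    rw [← h1]
    symm
    apply Finset.card_bij (fun z hz => (⟨z.1 + z.2, by
      rw [Finset.mem_filter] at hz
      exact hmem z.1 (Finset.mem_product.mp hz.1).1 z.2 (Finset.mem_product.mp hz.1).2⟩
        : ↥(rootSumSet f g)))
    · intro z hz
      rw [Finset.mem_filter] at hz ⊢
      refine ⟨Finset.mem_univ _, ?_⟩
      have h1 := (Finset.mem_product.mp hz.1).1
      have h2 := (Finset.mem_product.mp hz.1).2
      rw [hΨapp, hPhieval c z.1 z.2 h1 h2]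
      exact hz.2
    · intro z1 hz1 z2 hz2 heq
      rw [Finset.mem_filter] at hz1 hz2
      have h1 := Finset.mem_product.mp hz1.1
      have h2 := Finset.mem_product.mp hz2.1
      have heq2 : z1.1 + z1.2 = z2.1 + z2.2 := congrArg Subtype.val heq
      have := hinj z1.1 h1.1 z1.2 h1.2 z2.1 h2.1 z2.2 h2.2 heq2
      exact Prod.ext this.1 this.2
    · intro α hα
      rw [Finset.mem_filter] at hα
      have hα2 : (α : F) ∈ (Pf ×ˢ Pg).image fun z => z.1 + z.2 := by
        rw [← hSSdef]
        exact α.2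
      obtain ⟨z, hzmem, hzeq⟩ := Finset.mem_image.mp hα2
      have h1 := (Finset.mem_product.mp hzmem).1
      have h2 := (Finset.mem_product.mp hzmem).2
      refine ⟨z, ?_, ?_⟩
      · rw [Finset.mem_filter]
        refine ⟨hzmem, ?_⟩
        have h3 := hα.2
        rw [hΨapp] at h3
        rw [← hPhieval c z.1 z.2 h1 h2]
        rw [← hzeq] at h3
        exact h3
      · exact Subtype.ext hzeq
  refine ⟨hfinC, ?_, ?_⟩
  · obtain ⟨c₀, hc0aa, hc0ab, hc0ba, hc0wt⟩ := upper_bound hr hrn Pf Pg hPfcard hPgcard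
      h0f h0g hinj a b haval hbval
    have hc0U : c₀ ∈ Um := (hUmem c₀).mpr ⟨hc0aa, by rw [hc0ab, hc0ba]⟩
    refine ⟨Ψ c₀, ?_, ?_, ?_⟩
    · rw [hCeq]
      exact ⟨c₀, hc0U, rfl⟩
    · intro h0
      have h5 : c₀ = 0 := hPsiinj (by rw [h0, map_zero])
      rw [h5] at hc0ab
      exact one_ne_zero hc0ab.symm
    · rw [hwt c₀]
      exact hc0wt
  · rintro w ⟨v, hvC, hvne, rfl⟩
    rw [hCeq] at hvC
    obtain ⟨c, hcU, rfl⟩ := hvC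
    have hcne : c ≠ 0 := by
      rintro rfl
      exact hvne (map_zero Ψ)
    obtain ⟨hcaa, hctie⟩ := (hUmem c).mp hcU
    rw [hwt c]
    exact lower_bound hr hrn Pf Pg hPfcard hPgcard hinj a b haval hbval c hcne hcaa hctie
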